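/- A group G is residually non-abelian free (i.e., every nontrivial element survives under some homomorphism to a free group with nonabelian image) if and only if G is residually free and has trivial center. -/
import Mathlib

open FreeGroup

/-- In a free group on a type with two distinct elements, an element commuting with
everything is trivial. -/
lemma aux_center_eq_one {β : Type*} (a b : β) (hab : a ≠ b) {g : FreeGroup β}
    (hg : ∀ z : FreeGroup β, g * z = z * g) : g = 1 := by
  classical
  by_contra h1
  have hwne : g.toWord ≠ [] := fun h => h1 (toWord_eq_nil_iff.mp h)
  set w := g.toWord with hwdef
  have hred : reduce w = w := g.reduce_toWord
  have hgmk : mk w = g := g.mk_toWord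
  clear_value w
  set ℓ := w.getLast hwne with hldef
  set y : β := if ℓ.1 = a then b else a with hydef
  have hyx : y ≠ ℓ.1 := by
    by_cases h : ℓ.1 = a
    · simp [hydef, h]; exact fun hba => hab hba.symm
    · simpa [hydef, h] using fun hba => h hba.symm
  clear_value ℓ y
  -- invRev of w starts with the flipped last letter of w
  have hinv : invRev w = (ℓ.1, !ℓ.2) :: invRev w.dropLast := by
    conv_lhs => rw [← List.dropLast_append_getLast hwne]
    simp [invRev, ← hldef]
  have hredinv : reduce (invRev w) = invRev w := by
    rw [reduce_invRev, hred]
  -- Step 1 : toWord ((g * of y)⁻¹) = (y, false) :: invRev w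
  have key1 : ((g * of y)⁻¹).toWord = (y, false) :: invRev w := by
    have h2 : (g * of y)⁻¹ = mk ((y, false) :: invRev w) := by
      rw [← hgmk, of, mul_mk, inv_mk]
      congr 1
      simp [invRev]
    rw [h2, toWord_mk, reduce.cons, hredinv, hinv]
    dsimp only
    rw [if_neg (by rintro ⟨h, -⟩; exact hyx h)]
  -- hence toWord (g * of y) = w ++ [(y, true)]
  have key2 : (g * of y).toWord = w ++ [(y, true)] := by
    have h3 := congrArg invRev key1
    rw [toWord_inv, invRev_invRev] at h3
    rw [h3]
    simp [invRev, Function.comp_def]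
  -- Step 2 : toWord (of y * g) = reduce ((y,true) :: w)
  have key3 : (of y * g).toWord = reduce ((y, true) :: w) := by
    rw [← hgmk, of, mul_mk, toWord_mk]
    rfl
  have key4 : reduce ((y, true) :: w) = w ++ [(y, true)] := by
    rw [← key3, ← hg (of y), key2]
  -- now analyze the reduction
  obtain ⟨hd, tl, hw⟩ : ∃ hd tl, w = hd :: tl := by
    cases h : w with
    | nil => exact absurd h hwne
    | cons hd tl => exact ⟨hd, tl, rfl⟩
  subst hw
  rw [reduce.cons, hred] at key4
  dsimp only at key4
  by_cases hc : y = hd.1 ∧ true = !hd.2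
  · rw [if_pos hc] at key4
    have := congrArg List.length key4
    simp at this
    omega
  · rw [if_neg hc] at key4
    have h5 : ((y, true) :: hd :: tl).getLast (by simp)
        = ((hd :: tl) ++ [(y, true)]).getLast (by simp) := by
      exact List.getLast_congr _ _ key4
    rw [List.getLast_cons hwne, List.getLast_append_singleton] at h5
    rw [← hldef] at h5
    exact hyx (congrArg Prod.fst h5).symm

/-- The free group on a subsingleton type is commutative. -/
lemma aux_subsingleton_comm {β : Type*} [Subsingleton β] (u v : FreeGroup β) :
    u * v = v * u := by
  rcases isEmpty_or_nonempty β with h | ⟨⟨a⟩⟩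
  · have hall : ∀ z : FreeGroup β, z = 1 := by
      intro z
      have hz : z.toWord = [] := by
        cases hz : z.toWord with
        | nil => rfl
        | cons hd tl => exact (IsEmpty.false hd.1).elim
      exact toWord_eq_nil_iff.mp hz
    rw [hall u, hall v]
  · have key : ∀ z : FreeGroup β, z ∈ Subgroup.zpowers (of a) := by
      intro z
      refine FreeGroup.induction_on z (Subgroup.one_mem _) (fun x => ?_)
        (fun x hx => Subgroup.inv_mem _ hx) (fun x y hx hy => Subgroup.mul_mem _ hx hy)
      have hx : x = a := Subsingleton.elim x a
      subst hx
      exact Subgroup.mem_zpowers _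
    obtain ⟨m, hm⟩ := key u
    obtain ⟨n, hn⟩ := key v
    rw [← hm, ← hn, ← zpow_add, ← zpow_add, add_comm]

/-- Commutative transitivity for free groups: if `a ≠ 1` commutes with `x` and `y`,
then `x` commutes with `y`. -/
lemma aux_comm_trans {a x y : FreeGroup (Fin 2)} (ha : a ≠ 1)
    (hx : a * x = x * a) (hy : a * y = y * a) : x * y = y * x := by
  set H := Subgroup.centralizer ({a} : Set (FreeGroup (Fin 2))) with hH
  have haH : a ∈ H := by
    rw [hH, Subgroup.mem_centralizer_iff]
    rintro h ⟨rfl⟩; rfl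
  have hxH : x ∈ H := by
    rw [hH, Subgroup.mem_centralizer_iff]
    rintro h ⟨rfl⟩; exact hx
  have hyH : y ∈ H := by
    rw [hH, Subgroup.mem_centralizer_iff]
    rintro h ⟨rfl⟩; exact hy
  set A : H := ⟨a, haH⟩ with hA
  have hAcen : ∀ z : H, A * z = z * A := by
    rintro ⟨z, hz⟩
    rw [Subgroup.mem_centralizer_iff] at hz
    have := hz a rfl
    ext
    simpa using this
  haveI : IsFreeGroup H := inferInstance
  let e := IsFreeGroup.toFreeGroup H
  have hA1 : A ≠ 1 := fun h => ha (by simpa [hA, Subtype.ext_iff] using h)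
  have heA : e A ≠ 1 := fun h => hA1 (e.injective (by simpa using h))
  have heAcen : ∀ z : FreeGroup (IsFreeGroup.Generators H), e A * z = z * e A := by
    intro z
    have := hAcen (e.symm z)
    have h2 := congrArg e this
    simpa [_root_.map_mul] using h2
  by_cases h2 : ∃ p q : IsFreeGroup.Generators H, p ≠ q
  · obtain ⟨p, q, hpq⟩ := h2
    exact absurd (aux_center_eq_one p q hpq heAcen) heA
  · push_neg at h2
    haveI : Subsingleton (IsFreeGroup.Generators H) := ⟨h2⟩
    have : e ⟨x, hxH⟩ * e ⟨y, hyH⟩ = e ⟨y, hyH⟩ * e ⟨x, hxH⟩ :=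
      aux_subsingleton_comm _ _
    rw [← _root_.map_mul, ← _root_.map_mul] at this
    have h3 := e.injective this
    simpa [Subtype.ext_iff] using h3

/-- A group is residually non-abelian free iff it is residually free and has
trivial center. -/
theorem stmt_5 {G : Type*} [Group G] :
    (∀ g : G, g ≠ 1 → ∃ f : G →* FreeGroup (Fin 2),
        (¬ ∀ x ∈ f.range, ∀ y ∈ f.range, x * y = y * x) ∧ f g ≠ 1)
      ↔ ((∀ g : G, g ≠ 1 → ∃ f : G →* FreeGroup (Fin 2), f g ≠ 1)
          ∧ Subgroup.center G = ⊥) := by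
  constructor
  · intro h
    refine ⟨fun g hg => (h g hg).elim fun f hf => ⟨f, hf.2⟩, ?_⟩
    rw [Subgroup.eq_bot_iff_forall]
    intro g hgc
    by_contra hg1
    obtain ⟨f, hna, hfg⟩ := h g hg1
    push_neg at hna
    obtain ⟨x, ⟨u, rfl⟩, y, ⟨v, rfl⟩, hxy⟩ := hna
    have hcen := Subgroup.mem_center_iff.mp hgc
    have hcx : f g * f u = f u * f g := by
      rw [← _root_.map_mul, ← _root_.map_mul, hcen u]
    have hcy : f g * f v = f v * f g := by
      rw [← _root_.map_mul, ← _root_.map_mul, hcen v]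
    exact hxy (aux_comm_trans hfg hcx hcy)
  · rintro ⟨hres, hcen⟩ g hg
    have hgnc : g ∉ Subgroup.center G := by
      rw [hcen]; simpa using hg
    rw [Subgroup.mem_center_iff] at hgnc
    push_neg at hgnc
    obtain ⟨h, hh⟩ := hgnc
    set c := h * g * h⁻¹ * g⁻¹ with hc
    have hc1 : c ≠ 1 := by
      intro h1
      apply hh
      have h2 : h * g * h⁻¹ = g := mul_inv_eq_one.mp h1
      exact mul_inv_eq_iff_eq_mul.mp h2
    obtain ⟨f, hfc⟩ := hres c hc1
    refine ⟨f, ?_, ?_⟩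
    · intro hab
      apply hfc
      have hcomm := hab (f h) ⟨h, rfl⟩ (f g) ⟨g, rfl⟩
      rw [hc]
      simp only [_root_.map_mul, _root_.map_inv]
      rw [hcomm]
      group
    · intro hfg
      apply hfc
      rw [hc]
      simp only [_root_.map_mul, _root_.map_inv, hfg]
      group
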